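/- Let β > 0 and let b0 = (b_k)_{k≥1} be a sequence with Σ_{k=1}^∞ b_k² k^{2β} < ∞. For T > e let α be a random variable with density λ_T(x) = C_T^{−1} exp(−T^{1/(1+2x)}) on [0, log T] (C_T the normalizing constant), independent of the iid standard normal sequence (Z_k)_{k≥1}, and set W = (k^{−1/2−α} Z_k)_{k≥1}. Then there exist constants c, C > 0 and T0 > 0 such that for all T ≥ T0, with ε_T = c T^{−β/(1+2β)}, P( Σ_{k=1}^∞ (k^{−1/2−α} Z_k − b_k)² ≤ ε_T² ) ≥ exp( −C T ε_T² ). -/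

import Mathlib

open MeasureTheory ProbabilityTheory Real Set

open scoped NNReal ENNReal

set_option maxHeartbeats 1000000

lemma log_fact_ge (n : ℕ) : (n:ℝ) * Real.log n - n ≤ ∑ k ∈ Finset.range n, Real.log ((k:ℝ)+1) := by
  induction n with
  | zero => simp
  | succ n ih =>
    rw [Finset.sum_range_succ]
    have hlog : (n:ℝ) * Real.log ((n:ℝ)+1) - (n:ℝ) * Real.log n ≤ 1 := by
      rcases Nat.eq_zero_or_pos n with h0 | hpos
      · subst h0; simp
      · have hn : (0:ℝ) < n := by exact_mod_cast hpos
        have : Real.log ((n:ℝ)+1) - Real.log n = Real.log (((n:ℝ)+1)/n) := by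
          rw [Real.log_div (by positivity) (by positivity)]
        have h2 : Real.log (((n:ℝ)+1)/n) ≤ ((n:ℝ)+1)/n - 1 :=
          Real.log_le_sub_one_of_pos (by positivity)
        have h3 : ((n:ℝ)+1)/n - 1 = 1/n := by field_simp; ring
        calc (n:ℝ) * Real.log ((n:ℝ)+1) - (n:ℝ) * Real.log n
            = (n:ℝ) * (Real.log (((n:ℝ)+1)/n)) := by rw [← this]; ring
          _ ≤ (n:ℝ) * (1/n) := by
              apply mul_le_mul_of_nonneg_left _ hn.le
              rw [h3] at h2; exact h2
          _ = 1 := by field_simp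
    have hcast : ((n+1 : ℕ):ℝ) = (n:ℝ)+1 := by push_cast; ring
    rw [hcast]
    nlinarith [ih]

lemma sum_log_le (n : ℕ) (M : ℝ) (hn : (n:ℝ) ≤ M) :
    ∑ k ∈ Finset.range n, (Real.log M - Real.log ((k:ℝ)+1)) ≤ M := by
  rcases Nat.eq_zero_or_pos n with h0 | hpos
  · subst h0; simpa using (by linarith [hn] : (0:ℝ) ≤ M)
  · have hn0 : (0:ℝ) < n := by exact_mod_cast hpos
    have hM : 0 < M := lt_of_lt_of_le hn0 hn
    rw [Finset.sum_sub_distrib, Finset.sum_const, Finset.card_range, nsmul_eq_mul]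
    have h1 := log_fact_ge n
    have h2 : Real.log M - Real.log n ≤ M/n - 1 := by
      have := Real.log_le_sub_one_of_pos (show (0:ℝ) < M/n by positivity)
      rwa [Real.log_div hM.ne' hn0.ne'] at this
    have h3 : (n:ℝ) * (Real.log M - Real.log n) ≤ (n:ℝ) * (M/n - 1) :=
      mul_le_mul_of_nonneg_left h2 hn0.le
    have h4 : (n:ℝ) * (M/n - 1) = M - n := by field_simp
    nlinarith [h1]

lemma bern_tel {a x : ℝ} (ha : 0 < a) (hx : 1 ≤ x) :
    2*a*(x+1)^(-1-2*a) ≤ x^(-2*a) - (x+1)^(-2*a) := by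
  have hx0 : 0 < x := lt_of_lt_of_le one_pos hx
  have hy0 : 0 < x + 1 := by linarith
  have hu0 : 0 < x/(x+1) := by positivity
  have key : 1 + 2*a/(x+1) ≤ (x/(x+1))^(-2*a) := by
    rw [Real.rpow_def_of_pos hu0]
    have hlog : Real.log (x/(x+1)) ≤ x/(x+1) - 1 := Real.log_le_sub_one_of_pos hu0
    have h2 : x/(x+1) - 1 = -(1/(x+1)) := by field_simp; ring
    have h4 : 1/(x+1) ≤ -Real.log (x/(x+1)) := by linarith
    have h3 : 2*a/(x+1) ≤ -2*a*Real.log (x/(x+1)) := by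
      have := mul_le_mul_of_nonneg_left h4 (by positivity : (0:ℝ) ≤ 2*a)
      calc 2*a/(x+1) = 2*a*(1/(x+1)) := by ring
        _ ≤ 2*a*(-Real.log (x/(x+1))) := this
        _ = -2*a*Real.log (x/(x+1)) := by ring
    calc 1 + 2*a/(x+1) ≤ 1 + (-2*a*Real.log (x/(x+1))) := by linarith
      _ ≤ Real.exp (-2*a*Real.log (x/(x+1))) := by linarith [Real.add_one_le_exp (-2*a*Real.log (x/(x+1)))]
      _ = Real.exp (Real.log (x/(x+1)) * (-2*a)) := by rw [mul_comm]
  -- x^(-2a) = (x/(x+1))^(-2a) * (x+1)^(-2a)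
  have hsplit : x^(-2*a) = (x/(x+1))^(-2*a) * (x+1)^(-2*a) := by
    rw [← Real.mul_rpow (le_of_lt hu0) hy0.le]
    congr 1
    field_simp
  have hpow : (x+1)^(-1-2*a) = (x+1)^(-2*a) * (x+1)⁻¹ := by
    rw [← Real.rpow_neg_one (x+1), ← Real.rpow_add hy0]
    ring_nf
  have hp2 : (0:ℝ) < (x+1)^(-2*a) := Real.rpow_pos_of_pos hy0 _
  rw [hsplit, hpow]
  calc 2*a*((x+1)^(-2*a) * (x+1)⁻¹) = (1 + 2*a/(x+1)) * (x+1)^(-2*a) - (x+1)^(-2*a) := by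
        field_simp; ring
    _ ≤ (x/(x+1))^(-2*a) * (x+1)^(-2*a) - (x+1)^(-2*a) := by nlinarith [key, hp2]

lemma gauss_int (t σ c : ℝ) (ht : 0 ≤ t) :
    ∫ x, Real.exp (-(t * (σ * x - c)^2)) ∂(gaussianReal 0 1)
      = (Real.sqrt (1 + 2*t*σ^2))⁻¹ * Real.exp (-(t * c^2 / (1 + 2*t*σ^2))) := by
  have hp : (0:ℝ) < t*σ^2 + 1/2 := by positivity
  set p : ℝ := t*σ^2 + 1/2 with hpdef
  set m : ℝ := t*σ*c/p with hmdef
  set r : ℝ := t*c^2/(1+2*t*σ^2) with hrdef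
  have h2p : 1+2*t*σ^2 = 2*p := by rw [hpdef]; ring
  rw [gaussianReal_of_var_ne_zero 0 one_ne_zero]
  rw [show gaussianPDF 0 1 = (fun x => ((Real.toNNReal (gaussianPDFReal 0 1 x) : ℝ≥0) : ℝ≥0∞)) from rfl]
  rw [integral_withDensity_eq_integral_smul
    ((measurable_gaussianPDFReal 0 1).real_toNNReal) _]
  have hpdf : ∀ x : ℝ, (Real.toNNReal (gaussianPDFReal 0 1 x) : ℝ≥0) • Real.exp (-(t * (σ * x - c)^2))
      = (Real.sqrt (2*π))⁻¹ * Real.exp (-(r)) * Real.exp (-(p * (x - m)^2)) := by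
    intro x
    have hpdfx : gaussianPDFReal 0 1 x = (Real.sqrt (2*π))⁻¹ * Real.exp (-(x^2/2)) := by
      rw [gaussianPDFReal_def]
      norm_num
      exact Or.inl (by ring)
    have hnn : 0 ≤ gaussianPDFReal 0 1 x := gaussianPDFReal_nonneg 0 1 x
    rw [NNReal.smul_def, Real.coe_toNNReal _ hnn, hpdfx, smul_eq_mul, mul_assoc,
      ← Real.exp_add, mul_assoc ((Real.sqrt (2*π))⁻¹), ← Real.exp_add]
    have key : p * (x-m)^2 + r = x^2/2 + t * (σ*x - c)^2 := by
      rw [hmdef, hrdef, h2p]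
      field_simp
      ring
    congr 1
    exact congrArg Real.exp (by linarith [key])
  rw [show (fun x => (Real.toNNReal (gaussianPDFReal 0 1 x) : ℝ≥0) • Real.exp (-(t * (σ * x - c)^2)))
      = (fun x => (Real.sqrt (2*π))⁻¹ * Real.exp (-(r)) * Real.exp (-(p * (x - m)^2))) from funext hpdf]
  rw [MeasureTheory.integral_const_mul]
  have hshift : ∫ x : ℝ, Real.exp (-(p * (x - m)^2)) = ∫ x : ℝ, Real.exp (-(p * x^2)) := by
    exact MeasureTheory.integral_sub_right_eq_self (fun y => Real.exp (-(p * y^2))) m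
  rw [hshift]
  have hg : ∫ x : ℝ, Real.exp (-(p * x^2)) = Real.sqrt (π / p) := by
    simpa [neg_mul] using integral_gaussian p
  rw [hg]
  have hπ : (0:ℝ) < π := Real.pi_pos
  have hs2 : Real.sqrt (1+2*t*σ^2) = Real.sqrt 2 * Real.sqrt p := by
    rw [h2p, Real.sqrt_mul (by norm_num : (0:ℝ) ≤ 2)]
  have hsd : Real.sqrt (π/p) = Real.sqrt π / Real.sqrt p := Real.sqrt_div Real.pi_pos.le p
  have hsp : (0:ℝ) < Real.sqrt p := Real.sqrt_pos.2 hp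
  have hs2' : (0:ℝ) < Real.sqrt 2 := by positivity
  have hsπ : (0:ℝ) < Real.sqrt π := Real.sqrt_pos.2 hπ
  have hs2pi : Real.sqrt (2*π) = Real.sqrt 2 * Real.sqrt π := Real.sqrt_mul (by norm_num) π
  rw [hs2, hs2pi, hrdef, hsd]
  field_simp

lemma chernoff {Ω : Type*} [MeasurableSpace Ω] (P : Measure Ω) [IsProbabilityMeasure P]
    (X : ℕ → Ω → ℝ) (hX : ∀ k, Measurable (X k)) (hXnn : ∀ k ω, 0 ≤ X k ω)
    (hind : iIndepFun X P)
    (t ε2 Fb : ℝ) (ht : 0 < t) (hε2 : 0 ≤ ε2)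
    (hmgf : ∀ n, Real.exp (-Fb) ≤ ∏ k ∈ Finset.range n, mgf (X k) P (-t)) :
    ENNReal.ofReal (Real.exp (-Fb) - Real.exp (-(t*ε2)))
      ≤ P {ω | ∑' k, ENNReal.ofReal (X k ω) ≤ ENNReal.ofReal ε2} := by
  classical
  set E := {ω | ∑' k, ENNReal.ofReal (X k ω) ≤ ENNReal.ofReal ε2} with hE
  have hEmeas : MeasurableSet E :=
    measurableSet_le (Measurable.ennreal_tsum (fun k => (hX k).ennreal_ofReal)) measurable_const
  set G : ℕ → Ω → ℝ := fun n ω => Real.exp (-t * ∑ k ∈ Finset.range n, X k ω) with hG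
  have hGanti : ∀ ω, Antitone fun n => G n ω := by
    intro ω n m hnm
    apply Real.exp_le_exp.2
    have hsum : ∑ k ∈ Finset.range n, X k ω ≤ ∑ k ∈ Finset.range m, X k ω :=
      Finset.sum_le_sum_of_subset_of_nonneg (Finset.range_subset_range.2 hnm)
        (fun i _ _ => hXnn i ω)
    nlinarith [hsum]
  have hGpos : ∀ n ω, 0 < G n ω := fun n ω => Real.exp_pos _
  have hGle1 : ∀ n ω, G n ω ≤ 1 := by
    intro n ω
    rw [hG]
    simp only
    rw [show (1:ℝ) = Real.exp 0 from (Real.exp_zero).symm]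
    apply Real.exp_le_exp.2
    have : 0 ≤ ∑ k ∈ Finset.range n, X k ω :=
      Finset.sum_nonneg fun i _ => hXnn i ω
    nlinarith
  set Ginf : Ω → ℝ := fun ω => ⨅ n, G n ω with hGinf
  have hbdd : ∀ ω, BddBelow (Set.range fun n => G n ω) :=
    fun ω => ⟨0, fun x ⟨n, hn⟩ => hn ▸ (hGpos n ω).le⟩
  have htend : ∀ ω, Filter.Tendsto (fun n => G n ω) Filter.atTop (nhds (Ginf ω)) :=
    fun ω => tendsto_atTop_ciInf (hGanti ω) (hbdd ω)
  have hGmeas : ∀ n, Measurable (G n) := by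
    intro n
    apply Measurable.exp
    exact (Finset.measurable_sum _ (fun k _ => hX k)).const_mul (-t)
  have hGinfmeas : Measurable Ginf := Measurable.iInf (fun n => hGmeas n)
  have hGinfnn : ∀ ω, 0 ≤ Ginf ω :=
    fun ω => le_ciInf fun n => (hGpos n ω).le
  have hGinfle1 : ∀ ω, Ginf ω ≤ 1 :=
    fun ω => le_trans (ciInf_le (hbdd ω) 0) (hGle1 0 ω)
  have hlim : Filter.Tendsto (fun n => ∫ ω, G n ω ∂P) Filter.atTop (nhds (∫ ω, Ginf ω ∂P)) := by
    apply tendsto_integral_of_dominated_convergence (fun _ => (1:ℝ))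
      (fun n => (hGmeas n).aestronglyMeasurable) (integrable_const 1)
    · intro n
      filter_upwards with ω
      rw [Real.norm_eq_abs, abs_of_pos (hGpos n ω)]
      exact hGle1 n ω
    · filter_upwards with ω using htend ω
  have hIn : ∀ n, ∫ ω, G n ω ∂P = ∏ k ∈ Finset.range n, mgf (X k) P (-t) := by
    intro n
    rw [← iIndepFun.mgf_sum hind hX (Finset.range n)]
    unfold mgf
    congr 1
    funext ω
    simp only [Finset.sum_apply, hG, neg_mul]
  have hGinfint : Real.exp (-Fb) ≤ ∫ ω, Ginf ω ∂P := by
    apply ge_of_tendsto hlim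
    filter_upwards with n
    rw [hIn n]
    exact hmgf n
  have hpt : ∀ ω, Ginf ω ≤ E.indicator (fun _ => (1:ℝ)) ω + Real.exp (-(t*ε2)) := by
    intro ω
    by_cases hω : ω ∈ E
    · rw [Set.indicator_of_mem hω]
      have := hGinfle1 ω
      linarith [Real.exp_pos (-(t*ε2))]
    · rw [Set.indicator_of_notMem hω]
      have hlt : ENNReal.ofReal ε2 < ∑' k, ENNReal.ofReal (X k ω) := not_le.1 hω
      rw [ENNReal.tsum_eq_iSup_sum, lt_iSup_iff] at hlt
      obtain ⟨s, hs⟩ := hlt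
      obtain ⟨n, hn⟩ := s.exists_nat_subset_range
      have hs2 : ENNReal.ofReal ε2 < ∑ k ∈ Finset.range n, ENNReal.ofReal (X k ω) :=
        lt_of_lt_of_le hs (Finset.sum_le_sum_of_subset hn)
      rw [← ENNReal.ofReal_sum_of_nonneg (fun i _ => hXnn i ω)] at hs2
      have hlt2 : ε2 < ∑ k ∈ Finset.range n, X k ω :=
        (ENNReal.ofReal_lt_ofReal_iff_of_nonneg hε2).1 hs2
      have : Ginf ω ≤ G n ω := ciInf_le (hbdd ω) n
      have h2 : G n ω ≤ Real.exp (-(t*ε2)) := by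
        apply Real.exp_le_exp.2
        nlinarith
      linarith
  have hGint : Integrable Ginf P := by
    apply (integrable_const (1:ℝ)).mono' hGinfmeas.aestronglyMeasurable
    filter_upwards with ω
    rw [Real.norm_eq_abs, abs_of_nonneg (hGinfnn ω)]
    exact hGinfle1 ω
  have hrhsint : Integrable (fun ω => E.indicator (fun _ => (1:ℝ)) ω + Real.exp (-(t*ε2))) P := by
    apply Integrable.add _ (integrable_const _)
    exact (integrable_const (1:ℝ)).indicator hEmeas
  have hmono : ∫ ω, Ginf ω ∂P ≤ (P E).toReal + Real.exp (-(t*ε2)) := by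
    have := integral_mono hGint hrhsint hpt
    rwa [integral_add ((integrable_const (1:ℝ)).indicator hEmeas) (integrable_const _),
      integral_indicator_const (1:ℝ) hEmeas, integral_const, smul_eq_mul, smul_eq_mul,
      probReal_univ, one_mul, mul_one, measureReal_def] at this
  apply ENNReal.ofReal_le_of_le_toReal
  linarith

lemma pieceA (T a : ℝ) (ha : 0 < a) (hT : 1 ≤ T) (n : ℕ) :
    ∑ k ∈ Finset.range n, (1/2) * Real.log (1 + 2*T*((k:ℝ)+1)^(-(1+2*a)))
      ≤ ((Real.log 2 + (1+2*a))/2 + 2^(2*a)/(4*a)) * (2*T)^(1/(1+2*a)) := by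
  classical
  have hq0 : (0:ℝ) < 1+2*a := by linarith
  have h2T : (1:ℝ) ≤ 2*T := by linarith
  have h2T0 : (0:ℝ) < 2*T := by linarith
  set M : ℝ := (2*T)^(1/(1+2*a)) with hMdef
  have hM1 : 1 ≤ M := Real.one_le_rpow h2T (by positivity)
  have hM0 : 0 < M := by linarith
  have hMq : M^(1+2*a) = 2*T := by
    rw [hMdef, ← Real.rpow_mul h2T0.le, one_div, inv_mul_cancel₀ hq0.ne', Real.rpow_one]
  set m1 : ℕ := ⌊M⌋₊ with hm1def
  have hm1le : (m1:ℝ) ≤ M := Nat.floor_le hM0.le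
  have hm11 : 1 ≤ m1 := Nat.le_floor (by exact_mod_cast hM1)
  have hm11R : (1:ℝ) ≤ (m1:ℝ) := by exact_mod_cast hm11
  have hm1ge : M/2 ≤ (m1:ℝ) := by
    rcases le_or_gt 2 M with h|h
    · have := Nat.sub_one_lt_floor M
      rw [← hm1def] at this
      linarith
    · linarith
  have hkpos : ∀ k:ℕ, (0:ℝ) < (k:ℝ)+1 := fun k => by positivity
  have hlampos : ∀ k:ℕ, 0 < 2*T*((k:ℝ)+1)^(-(1+2*a)) :=
    fun k => mul_pos h2T0 (Real.rpow_pos_of_pos (hkpos k) _)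
  have hlam_eq : ∀ k:ℕ, 2*T*((k:ℝ)+1)^(-(1+2*a)) = (M/((k:ℝ)+1))^(1+2*a) := by
    intro k
    rw [Real.div_rpow hM0.le (hkpos k).le, hMq, Real.rpow_neg (hkpos k).le, div_eq_mul_inv]
  -- split the sum
  set s1 := (Finset.range n).filter (fun k : ℕ => ((k:ℝ)+1) ≤ M) with hs1
  set s2 := (Finset.range n).filter (fun k : ℕ => ¬((k:ℝ)+1) ≤ M) with hs2
  have hsplit : ∑ k ∈ Finset.range n, (1/2) * Real.log (1 + 2*T*((k:ℝ)+1)^(-(1+2*a)))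
      = ∑ k ∈ s1, (1/2) * Real.log (1 + 2*T*((k:ℝ)+1)^(-(1+2*a)))
        + ∑ k ∈ s2, (1/2) * Real.log (1 + 2*T*((k:ℝ)+1)^(-(1+2*a))) :=
    (Finset.sum_filter_add_sum_filter_not _ _ _).symm
  -- s1 bound
  have key1 : ∀ k ∈ s1, (1/2) * Real.log (1 + 2*T*((k:ℝ)+1)^(-(1+2*a)))
      ≤ (1/2)*(Real.log 2 + (1+2*a)*(Real.log M - Real.log ((k:ℝ)+1))) := by
    intro k hk
    have hkM : ((k:ℝ)+1) ≤ M := (Finset.mem_filter.1 hk).2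
    have hbase1 : 1 ≤ M/((k:ℝ)+1) := (one_le_div (hkpos k)).2 hkM
    have hlam1 : 1 ≤ (M/((k:ℝ)+1))^(1+2*a) := Real.one_le_rpow hbase1 hq0.le
    have hlog1 : Real.log (1 + 2*T*((k:ℝ)+1)^(-(1+2*a)))
        ≤ Real.log (2 * ((M/((k:ℝ)+1))^(1+2*a))) := by
      apply Real.log_le_log (by linarith [hlampos k])
      rw [hlam_eq k]; linarith
    have hlog2 : Real.log (2 * ((M/((k:ℝ)+1))^(1+2*a)))
        = Real.log 2 + (1+2*a)*(Real.log M - Real.log ((k:ℝ)+1)) := by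
      rw [Real.log_mul (by norm_num) (by positivity),
        Real.log_rpow (by positivity), Real.log_div hM0.ne' (hkpos k).ne']
    linarith
  have hsum1 : ∑ k ∈ s1, (1/2) * Real.log (1 + 2*T*((k:ℝ)+1)^(-(1+2*a)))
      ≤ (1/2)*(Real.log 2 + (1+2*a)) * M := by
    calc ∑ k ∈ s1, (1/2) * Real.log (1 + 2*T*((k:ℝ)+1)^(-(1+2*a)))
        ≤ ∑ k ∈ s1, (1/2)*(Real.log 2 + (1+2*a)*(Real.log M - Real.log ((k:ℝ)+1))) :=
          Finset.sum_le_sum key1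
      _ ≤ ∑ k ∈ Finset.range m1, (1/2)*(Real.log 2 + (1+2*a)*(Real.log M - Real.log ((k:ℝ)+1))) := by
          apply Finset.sum_le_sum_of_subset_of_nonneg
          · intro k hk
            have hkM : ((k:ℝ)+1) ≤ M := (Finset.mem_filter.1 hk).2
            have : k+1 ≤ m1 := Nat.le_floor (by push_cast; linarith)
            exact Finset.mem_range.2 (by omega)
          · intro k hk _
            have hkm : k < m1 := Finset.mem_range.1 hk
            have h1 : ((k:ℝ)+1) ≤ (m1:ℝ) := by exact_mod_cast hkm
            have h2 : Real.log ((k:ℝ)+1) ≤ Real.log M :=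
              Real.log_le_log (hkpos k) (by linarith)
            have h3 : (0:ℝ) ≤ Real.log 2 := Real.log_nonneg (by norm_num)
            nlinarith
      _ ≤ (1/2)*(Real.log 2 + (1+2*a)) * M := by
          have hexp : ∑ k ∈ Finset.range m1, (1/2)*(Real.log 2 + (1+2*a)*(Real.log M - Real.log ((k:ℝ)+1)))
              = (1/2)*((m1:ℝ)*Real.log 2 + (1+2*a) * ∑ k ∈ Finset.range m1, (Real.log M - Real.log ((k:ℝ)+1))) := by
            rw [← Finset.mul_sum, Finset.sum_add_distrib, Finset.sum_const, Finset.card_range,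
              ← Finset.mul_sum, nsmul_eq_mul]
          rw [hexp]
          have hst := sum_log_le m1 M hm1le
          have h3 : (0:ℝ) ≤ Real.log 2 := Real.log_nonneg (by norm_num)
          have hsge : (0:ℝ) ≤ ∑ k ∈ Finset.range m1, (Real.log M - Real.log ((k:ℝ)+1)) := by
            apply Finset.sum_nonneg
            intro k hk
            have hkm : k < m1 := Finset.mem_range.1 hk
            have h1 : ((k:ℝ)+1) ≤ (m1:ℝ) := by exact_mod_cast hkm
            have h2 : Real.log ((k:ℝ)+1) ≤ Real.log M :=
              Real.log_le_log (hkpos k) (by linarith)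
            linarith
          nlinarith
  -- s2 bound
  have hanti : ∀ x y : ℝ, 0 < x → x ≤ y → y^(-(2*a)) ≤ x^(-(2*a)) :=
    fun x y hx hxy => Real.rpow_le_rpow_of_nonpos hx hxy (by linarith)
  have key2 : ∀ k ∈ s2, (1/2) * Real.log (1 + 2*T*((k:ℝ)+1)^(-(1+2*a)))
      ≤ (T/(2*a)) * ((k:ℝ)^(-(2*a)) - ((k:ℝ)+1)^(-(2*a))) := by
    intro k hk
    have hkM : M < ((k:ℝ)+1) := not_le.1 (Finset.mem_filter.1 hk).2
    have hk1 : (1:ℝ) ≤ (k:ℝ) := by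
      rcases Nat.eq_zero_or_pos k with h0|h
      · exfalso; subst h0; simp at hkM; linarith
      · exact_mod_cast h
    have hlog : Real.log (1 + 2*T*((k:ℝ)+1)^(-(1+2*a))) ≤ 2*T*((k:ℝ)+1)^(-(1+2*a)) := by
      have := Real.log_le_sub_one_of_pos (show (0:ℝ) < 1 + 2*T*((k:ℝ)+1)^(-(1+2*a)) by linarith [hlampos k])
      linarith
    have hbt := bern_tel ha hk1
    have hexp : ((k:ℝ)+1)^(-(1+2*a)) = ((k:ℝ)+1)^(-1-2*a) := by ring_nf
    have h2a : (0:ℝ) < 2*a := by linarith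
    have hTnn : (0:ℝ) ≤ T := by linarith
    rw [hexp]
    have hmul := mul_le_mul_of_nonneg_left hbt (show (0:ℝ) ≤ T/(2*a) by positivity)
    have hln : (T/(2*a)) * (2*a*((k:ℝ)+1)^(-1-2*a)) = T * ((k:ℝ)+1)^(-1-2*a) := by
      field_simp
    have hexp2 : ((k:ℝ)+1)^(-(2*a)) = ((k:ℝ)+1)^(-(2*a)) := rfl
    -- goal : (1/2) * log(...) ≤ (T/(2a)) * diff
    have : (1/2) * Real.log (1 + 2*T*((k:ℝ)+1)^(-1-2*a)) ≤ T * ((k:ℝ)+1)^(-1-2*a) := by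
      rw [← hexp]
      linarith [hlog]
    calc (1/2) * Real.log (1 + 2*T*((k:ℝ)+1)^(-1-2*a))
        ≤ T * ((k:ℝ)+1)^(-1-2*a) := this
      _ = (T/(2*a)) * (2*a*((k:ℝ)+1)^(-1-2*a)) := by rw [hln]
      _ ≤ (T/(2*a)) * ((k:ℝ)^(-(2*a)) - ((k:ℝ)+1)^(-(2*a))) := by
          apply mul_le_mul_of_nonneg_left _ (by positivity)
          calc 2*a*((k:ℝ)+1)^(-1-2*a) ≤ (k:ℝ)^(-2*a) - ((k:ℝ)+1)^(-2*a) := hbt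
            _ = (k:ℝ)^(-(2*a)) - ((k:ℝ)+1)^(-(2*a)) := by norm_num
  have hsum2 : ∑ k ∈ s2, (1/2) * Real.log (1 + 2*T*((k:ℝ)+1)^(-(1+2*a)))
      ≤ 2^(2*a)/(4*a) * M := by
    have hTnn : (0:ℝ) ≤ T := by linarith
    have step1 : ∑ k ∈ s2, (1/2) * Real.log (1 + 2*T*((k:ℝ)+1)^(-(1+2*a)))
        ≤ ∑ k ∈ s2, (T/(2*a)) * ((k:ℝ)^(-(2*a)) - ((k:ℝ)+1)^(-(2*a))) :=
      Finset.sum_le_sum key2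
    have hsub2 : s2 ⊆ Finset.Ico m1 n := by
      intro k hk
      obtain ⟨hkn, hkM⟩ := Finset.mem_filter.1 hk
      have hkM' : M < ((k:ℝ)+1) := not_le.1 hkM
      have : (m1:ℝ) < (k:ℝ)+1 := lt_of_le_of_lt hm1le hkM'
      have hm1k : m1 ≤ k := by exact_mod_cast Nat.lt_succ_iff.1 (by exact_mod_cast this)
      exact Finset.mem_Ico.2 ⟨hm1k, Finset.mem_range.1 hkn⟩
    have hnn : ∀ k ∈ Finset.Ico m1 n, 0 ≤ (T/(2*a)) * ((k:ℝ)^(-(2*a)) - ((k:ℝ)+1)^(-(2*a))) := by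
      intro k hk
      have hkm : m1 ≤ k := (Finset.mem_Ico.1 hk).1
      have hk1 : (1:ℝ) ≤ (k:ℝ) := le_trans hm11R (by exact_mod_cast hkm)
      have := hanti (k:ℝ) ((k:ℝ)+1) (by linarith) (by linarith)
      apply mul_nonneg (by positivity)
      linarith
    have step2 : ∑ k ∈ s2, (T/(2*a)) * ((k:ℝ)^(-(2*a)) - ((k:ℝ)+1)^(-(2*a)))
        ≤ ∑ k ∈ Finset.Ico m1 n, (T/(2*a)) * ((k:ℝ)^(-(2*a)) - ((k:ℝ)+1)^(-(2*a))) :=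
      Finset.sum_le_sum_of_subset_of_nonneg hsub2 (fun k hk _ => hnn k hk)
    have step3 : ∑ k ∈ Finset.Ico m1 n, (T/(2*a)) * ((k:ℝ)^(-(2*a)) - ((k:ℝ)+1)^(-(2*a)))
        ≤ (T/(2*a)) * (m1:ℝ)^(-(2*a)) := by
      rw [← Finset.mul_sum]
      apply mul_le_mul_of_nonneg_left _ (by positivity)
      rcases le_or_gt m1 n with h|h
      · have htel : ∑ k ∈ Finset.Ico m1 n, ((k:ℝ)^(-(2*a)) - ((k:ℝ)+1)^(-(2*a)))
            = ∑ k ∈ Finset.range n, ((k:ℝ)^(-(2*a)) - ((k:ℝ)+1)^(-(2*a)))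
              - ∑ k ∈ Finset.range m1, ((k:ℝ)^(-(2*a)) - ((k:ℝ)+1)^(-(2*a))) := by
          rw [Finset.sum_Ico_eq_sub _ h]
        have ht1 : ∀ m : ℕ, ∑ k ∈ Finset.range m, ((k:ℝ)^(-(2*a)) - ((k:ℝ)+1)^(-(2*a)))
            = ((0:ℕ):ℝ)^(-(2*a)) - ((m:ℕ):ℝ)^(-(2*a)) := by
          intro m
          have := Finset.sum_range_sub' (fun k : ℕ => ((k:ℝ))^(-(2*a))) m
          rw [← this]
          apply Finset.sum_congr rfl
          intro k _
          push_cast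
          norm_num
        rw [htel, ht1 n, ht1 m1]
        have hn0 : (0:ℝ) ≤ ((n:ℕ):ℝ)^(-(2*a)) := Real.rpow_nonneg (by positivity) _
        simp only [Nat.cast_zero]
        linarith
      · have : Finset.Ico m1 n = ∅ := Finset.Ico_eq_empty (by omega)
        rw [this, Finset.sum_empty]
        positivity
    have hfin : (T/(2*a)) * (m1:ℝ)^(-(2*a)) ≤ 2^(2*a)/(4*a) * M := by
      have h1 : (m1:ℝ)^(-(2*a)) ≤ (M/2)^(-(2*a)) := hanti (M/2) (m1:ℝ) (by linarith) hm1ge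
      have h2 : (M/2)^(-(2*a)) = 2^(2*a) * M^(-(2*a)) := by
        rw [Real.div_rpow hM0.le (by norm_num : (0:ℝ) ≤ 2),
          Real.rpow_neg hM0.le, Real.rpow_neg (by norm_num : (0:ℝ) ≤ 2)]
        field_simp
      have h3 : T * M^(-(2*a)) = M/2 := by
        have := Real.rpow_add hM0 (1+2*a) (-(2*a))
        rw [hMq] at this
        have h4 : (1+2*a) + -(2*a) = 1 := by ring
        rw [h4, Real.rpow_one] at this
        -- this : M = 2*T * M^(-(2*a))
        linarith [this]
      have hMnn : (0:ℝ) ≤ M^(-(2*a)) := Real.rpow_nonneg hM0.le _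
      calc (T/(2*a)) * (m1:ℝ)^(-(2*a)) ≤ (T/(2*a)) * (2^(2*a) * M^(-(2*a))) := by
            apply mul_le_mul_of_nonneg_left _ (by positivity)
            linarith
        _ = 2^(2*a)/(4*a) * (2 * (T * M^(-(2*a)))) := by ring
        _ = 2^(2*a)/(4*a) * M := by rw [h3]; ring
    linarith
  rw [hsplit]
  have hfinal : (1/2)*(Real.log 2 + (1+2*a)) * M + 2^(2*a)/(4*a) * M
      = ((Real.log 2 + (1+2*a))/2 + 2^(2*a)/(4*a)) * M := by ring
  linarith

lemma pieceB (T a β B : ℝ) (hβ : 0 < β) (hβa : β ≤ a) (hT : 1 ≤ T) (b : ℕ → ℝ)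
    (hbB : ∀ n : ℕ, ∑ k ∈ Finset.range n, (b k)^2 * ((k:ℝ)+1)^(2*β) ≤ B) (n : ℕ) :
    ∑ k ∈ Finset.range n, T*(b k)^2/(1 + 2*T*((k:ℝ)+1)^(-(1+2*a)))
      ≤ B * ((2*T)^(1/(1+2*a)))^((1+2*a)-2*β) / 2 := by
  have hq0 : (0:ℝ) < 1+2*a := by linarith
  have h2T : (1:ℝ) ≤ 2*T := by linarith
  have h2T0 : (0:ℝ) < 2*T := by linarith
  have hT0 : (0:ℝ) < T := by linarith
  set M : ℝ := (2*T)^(1/(1+2*a)) with hMdef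
  have hM1 : 1 ≤ M := Real.one_le_rpow h2T (by positivity)
  have hM0 : 0 < M := by linarith
  have hMq : M^(1+2*a) = 2*T := by
    rw [hMdef, ← Real.rpow_mul h2T0.le, one_div, inv_mul_cancel₀ hq0.ne', Real.rpow_one]
  have hqβ : (0:ℝ) ≤ (1+2*a) - 2*β := by linarith
  set D : ℝ := M^((1+2*a)-2*β) with hDdef
  have hD0 : 0 < D := Real.rpow_pos_of_pos hM0 _
  have hkpos : ∀ k:ℕ, (0:ℝ) < (k:ℝ)+1 := fun k => by positivity
  have hlampos : ∀ k:ℕ, 0 < 2*T*((k:ℝ)+1)^(-(1+2*a)) :=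
    fun k => mul_pos h2T0 (Real.rpow_pos_of_pos (hkpos k) _)
  have key : ∀ k : ℕ, T/(1 + 2*T*((k:ℝ)+1)^(-(1+2*a))) ≤ ((k:ℝ)+1)^(2*β) * D / 2 := by
    intro k
    have hkp := hkpos k
    have hlp := hlampos k
    have h5 : (0:ℝ) ≤ ((k:ℝ)+1)^(2*β) := Real.rpow_nonneg hkp.le _
    rcases le_or_gt ((k:ℝ)+1) M with hkM | hkM
    · have h1 : T/(1 + 2*T*((k:ℝ)+1)^(-(1+2*a))) ≤ T/(2*T*((k:ℝ)+1)^(-(1+2*a))) := by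
        apply div_le_div_of_nonneg_left hT0.le hlp
        linarith
      have h2 : T/(2*T*((k:ℝ)+1)^(-(1+2*a))) = ((k:ℝ)+1)^(1+2*a)/2 := by
        rw [Real.rpow_neg hkp.le]
        have hx : ((k:ℝ)+1)^(1+2*a) ≠ 0 := (Real.rpow_pos_of_pos hkp _).ne'
        field_simp
      have h3 : ((k:ℝ)+1)^(1+2*a) = ((k:ℝ)+1)^(2*β) * ((k:ℝ)+1)^((1+2*a)-2*β) := by
        rw [← Real.rpow_add hkp]
        ring_nf
      have h4 : ((k:ℝ)+1)^((1+2*a)-2*β) ≤ D :=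
        Real.rpow_le_rpow hkp.le hkM hqβ
      have h6 := mul_le_mul_of_nonneg_left h4 h5
      calc T/(1 + 2*T*((k:ℝ)+1)^(-(1+2*a))) ≤ ((k:ℝ)+1)^(1+2*a)/2 := by rw [← h2]; exact h1
        _ = ((k:ℝ)+1)^(2*β) * ((k:ℝ)+1)^((1+2*a)-2*β) / 2 := by rw [h3]
        _ ≤ ((k:ℝ)+1)^(2*β) * D / 2 := by linarith
    · have h1 : T/(1 + 2*T*((k:ℝ)+1)^(-(1+2*a))) ≤ T :=
        div_le_self hT0.le (by linarith)
      have h2 : M^(1+2*a) = M^(2*β) * D := by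
        rw [hDdef, ← Real.rpow_add hM0]
        ring_nf
      have h3 : M^(2*β) ≤ ((k:ℝ)+1)^(2*β) :=
        Real.rpow_le_rpow hM0.le hkM.le (by linarith)
      have h6 := mul_le_mul_of_nonneg_right h3 hD0.le
      calc T/(1 + 2*T*((k:ℝ)+1)^(-(1+2*a))) ≤ T := h1
        _ = M^(2*β) * D / 2 := by rw [← h2, hMq]; ring
        _ ≤ ((k:ℝ)+1)^(2*β) * D / 2 := by linarith
  have hsum : ∑ k ∈ Finset.range n, T*(b k)^2/(1 + 2*T*((k:ℝ)+1)^(-(1+2*a)))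
      ≤ ∑ k ∈ Finset.range n, (b k)^2 * ((k:ℝ)+1)^(2*β) * (D/2) := by
    apply Finset.sum_le_sum
    intro k _
    have hk2 : (0:ℝ) ≤ (b k)^2 := sq_nonneg _
    calc T*(b k)^2/(1 + 2*T*((k:ℝ)+1)^(-(1+2*a)))
        = (b k)^2 * (T/(1 + 2*T*((k:ℝ)+1)^(-(1+2*a)))) := by ring
      _ ≤ (b k)^2 * (((k:ℝ)+1)^(2*β) * D / 2) := mul_le_mul_of_nonneg_left (key k) hk2
      _ = (b k)^2 * ((k:ℝ)+1)^(2*β) * (D/2) := by ring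
  rw [← Finset.sum_mul] at hsum
  have hfin := mul_le_mul_of_nonneg_right (hbB n) (by positivity : (0:ℝ) ≤ D/2)
  calc ∑ k ∈ Finset.range n, T*(b k)^2/(1 + 2*T*((k:ℝ)+1)^(-(1+2*a)))
      ≤ (∑ k ∈ Finset.range n, (b k)^2 * ((k:ℝ)+1)^(2*β)) * (D/2) := hsum
    _ ≤ B * (D/2) := hfin
    _ = B * D / 2 := by ring

noncomputable def K0 (β B : ℝ) : ℝ :=
  ((Real.log 2 + (3+2*β))/2 + 2^(2*β+2)/(4*β) + Real.exp 2 * B) * 2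

lemma Fbound (β B T a : ℝ) (hβ : 0 < β) (b : ℕ → ℝ)
    (hbB : ∀ n : ℕ, ∑ k ∈ Finset.range n, (b k)^2 * ((k:ℝ)+1)^(2*β) ≤ B)
    (hT : Real.exp 1 ≤ T) (ha1 : β ≤ a) (ha2 : a ≤ β + 1/Real.log T) (n : ℕ) :
    ∑ k ∈ Finset.range n, ((1/2) * Real.log (1 + 2*T*((k:ℝ)+1)^(-(1+2*a)))
        + T*(b k)^2/(1 + 2*T*((k:ℝ)+1)^(-(1+2*a))))
      ≤ K0 β B * T^(1/(1+2*β)) := by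
  have he1 : (1:ℝ) ≤ Real.exp 1 := by linarith [Real.add_one_le_exp 1]
  have hT1 : (1:ℝ) ≤ T := le_trans he1 hT
  have hT0 : (0:ℝ) < T := by linarith
  have hlogT1 : 1 ≤ Real.log T := by
    have := Real.log_le_log (Real.exp_pos 1) hT
    rwa [Real.log_exp] at this
  have hδ : 1/Real.log T ≤ 1 := by
    rw [div_le_one (by linarith)]; linarith
  have ha0 : 0 < a := lt_of_lt_of_le hβ ha1
  have haβ1 : a ≤ β + 1 := le_trans ha2 (by linarith)
  have hB0 : 0 ≤ B := by
    have := hbB 0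
    simpa using this
  have hq0 : (0:ℝ) < 1+2*a := by linarith
  have hqβ0 : (0:ℝ) < 1+2*β := by linarith
  have h2T : (1:ℝ) ≤ 2*T := by linarith
  have h2T0 : (0:ℝ) < 2*T := by linarith
  set γ : ℝ := 1/(1+2*β) with hγdef
  have hγ0 : 0 < γ := by positivity
  have hγ1 : γ ≤ 1 := by rw [hγdef, div_le_one hqβ0]; linarith
  set Tγ : ℝ := T^γ with hTγdef
  have hTγ1 : 1 ≤ Tγ := Real.one_le_rpow hT1 hγ0.le
  have hTγ0 : 0 < Tγ := by linarith
  set M : ℝ := (2*T)^(1/(1+2*a)) with hMdef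
  have hM1 : 1 ≤ M := Real.one_le_rpow h2T (by positivity)
  have hM0 : 0 < M := by linarith
  have h2Tγle : (2*T)^γ ≤ 2*Tγ := by
    have h1 : (2*T)^γ = 2^γ * Tγ := Real.mul_rpow (by norm_num) hT0.le
    have h2 : (2:ℝ)^γ ≤ 2^(1:ℝ) := Real.rpow_le_rpow_of_exponent_le (by norm_num) hγ1
    rw [Real.rpow_one] at h2
    rw [h1]
    exact mul_le_mul_of_nonneg_right h2 hTγ0.le
  have hMle : M ≤ 2*Tγ := by
    have h1 : M ≤ (2*T)^γ := by
      apply Real.rpow_le_rpow_of_exponent_le h2T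
      rw [hγdef]
      apply one_div_le_one_div_of_le hqβ0
      linarith
    linarith
  have hDle : M^((1+2*a)-2*β) ≤ 2*Real.exp 2 * Tγ := by
    have hrw : M^((1+2*a)-2*β) = (2*T)^((1/(1+2*a))*((1+2*a)-2*β)) := by
      rw [hMdef, ← Real.rpow_mul h2T0.le]
    have hid : (1/(1+2*a))*((1+2*a)-2*β) - γ = 4*β*(a-β)/((1+2*a)*(1+2*β)) := by
      rw [hγdef]
      field_simp
      ring
    have haβ : a - β ≤ 1/Real.log T := by linarith
    have hsq : 4*β ≤ (1+2*β)*(1+2*β) := by nlinarith [sq_nonneg (1-2*β)]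
    have hee : 4*β*(a-β)/((1+2*a)*(1+2*β)) ≤ 1/Real.log T := by
      rw [div_le_iff₀ (by positivity)]
      have h4 : (0:ℝ) ≤ 1/Real.log T := by positivity
      have e1 : 4*β*(a-β) ≤ 4*β*(1/Real.log T) :=
        mul_le_mul_of_nonneg_left haβ (by linarith)
      have e2 : 4*β*(1/Real.log T) ≤ ((1+2*β)*(1+2*β))*(1/Real.log T) :=
        mul_le_mul_of_nonneg_right hsq h4
      have e3 : ((1+2*β)*(1+2*β))*(1/Real.log T) ≤ ((1+2*a)*(1+2*β))*(1/Real.log T) :=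
        mul_le_mul_of_nonneg_right
          (mul_le_mul_of_nonneg_right (by linarith) (by linarith)) h4
      nlinarith [e1, e2, e3]
    have hexple : (1/(1+2*a))*((1+2*a)-2*β) ≤ γ + 1/Real.log T := by linarith
    have h1 : (2*T)^((1/(1+2*a))*((1+2*a)-2*β)) ≤ (2*T)^(γ + 1/Real.log T) :=
      Real.rpow_le_rpow_of_exponent_le h2T hexple
    have h2 : (2*T)^(γ + 1/Real.log T) = (2*T)^γ * (2*T)^(1/Real.log T) :=
      Real.rpow_add h2T0 _ _
    have h3 : (2*T)^(1/Real.log T) ≤ Real.exp 2 := by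
      rw [Real.rpow_def_of_pos h2T0]
      apply Real.exp_le_exp.2
      have hlog2T : Real.log (2*T) = Real.log 2 + Real.log T :=
        Real.log_mul (by norm_num) hT0.ne'
      have hlog2 : Real.log 2 ≤ 1 := by
        have := Real.log_le_sub_one_of_pos (by norm_num : (0:ℝ) < 2)
        linarith
      have hlog2nn : (0:ℝ) ≤ Real.log 2 := Real.log_nonneg (by norm_num)
      rw [hlog2T]
      rw [show (Real.log 2 + Real.log T) * (1/Real.log T)
          = Real.log 2 / Real.log T + 1 from by field_simp]
      have : Real.log 2 / Real.log T ≤ Real.log 2 := by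
        rw [div_le_iff₀ (by linarith)]
        nlinarith [mul_le_mul_of_nonneg_left hlogT1 hlog2nn]
      linarith
    have h4 : (2*T)^γ * (2*T)^(1/Real.log T) ≤ (2*Tγ) * Real.exp 2 := by
      apply mul_le_mul h2Tγle h3 (Real.rpow_pos_of_pos h2T0 _).le (by positivity)
    calc M^((1+2*a)-2*β) = (2*T)^((1/(1+2*a))*((1+2*a)-2*β)) := hrw
      _ ≤ (2*T)^(γ + 1/Real.log T) := h1
      _ = (2*T)^γ * (2*T)^(1/Real.log T) := h2
      _ ≤ (2*Tγ) * Real.exp 2 := h4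
      _ = 2*Real.exp 2 * Tγ := by ring
  -- combine
  rw [Finset.sum_add_distrib]
  have hA := pieceA T a ha0 hT1 n
  have hB := pieceB T a β B hβ ha1 hT1 b hbB n
  have hcA : (Real.log 2 + (1+2*a))/2 + 2^(2*a)/(4*a)
      ≤ (Real.log 2 + (3+2*β))/2 + 2^(2*β+2)/(4*β) := by
    have h1 : (1:ℝ)+2*a ≤ 3+2*β := by linarith
    have h2 : (2:ℝ)^(2*a) ≤ 2^(2*β+2) :=
      Real.rpow_le_rpow_of_exponent_le (by norm_num) (by linarith)
    have h3 : 2^(2*a)/(4*a) ≤ 2^(2*β+2)/(4*β) := by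
      apply div_le_div₀ (by positivity) h2 (by linarith)
      linarith
    linarith
  have hcA0 : (0:ℝ) ≤ (Real.log 2 + (1+2*a))/2 + 2^(2*a)/(4*a) := by
    have hlog2nn : (0:ℝ) ≤ Real.log 2 := Real.log_nonneg (by norm_num)
    positivity
  have hAfin : ∑ k ∈ Finset.range n, (1/2) * Real.log (1 + 2*T*((k:ℝ)+1)^(-(1+2*a)))
      ≤ ((Real.log 2 + (3+2*β))/2 + 2^(2*β+2)/(4*β)) * (2*Tγ) := by
    calc ∑ k ∈ Finset.range n, (1/2) * Real.log (1 + 2*T*((k:ℝ)+1)^(-(1+2*a)))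
        ≤ ((Real.log 2 + (1+2*a))/2 + 2^(2*a)/(4*a)) * M := hA
      _ ≤ ((Real.log 2 + (3+2*β))/2 + 2^(2*β+2)/(4*β)) * (2*Tγ) := by
          apply mul_le_mul hcA hMle hM0.le
          have hlog2nn : (0:ℝ) ≤ Real.log 2 := Real.log_nonneg (by norm_num)
          positivity
  have hBfin : ∑ k ∈ Finset.range n, T*(b k)^2/(1 + 2*T*((k:ℝ)+1)^(-(1+2*a)))
      ≤ Real.exp 2 * B * Tγ := by
    calc ∑ k ∈ Finset.range n, T*(b k)^2/(1 + 2*T*((k:ℝ)+1)^(-(1+2*a)))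
        ≤ B * M^((1+2*a)-2*β) / 2 := hB
      _ ≤ B * (2*Real.exp 2 * Tγ)/2 := by
          have := mul_le_mul_of_nonneg_left hDle hB0
          linarith
      _ = Real.exp 2 * B * Tγ := by ring
  unfold K0
  have hnn : (0:ℝ) ≤ Real.exp 2 * B * Tγ :=
    mul_nonneg (mul_nonneg (Real.exp_pos 2).le hB0) hTγ0.le
  nlinarith [hAfin, hBfin, hnn]

lemma mgf_coord {Ω : Type*} [MeasurableSpace Ω] (P : Measure Ω) [IsProbabilityMeasure P]
    (W : Ω → ℝ) (hWm : Measurable W) (hW : Measure.map W P = gaussianReal 0 1)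
    (t σ c : ℝ) (ht : 0 ≤ t) :
    mgf (fun ω => (σ * W ω - c)^2) P (-t)
      = (Real.sqrt (1 + 2*t*σ^2))⁻¹ * Real.exp (-(t * c^2 / (1 + 2*t*σ^2))) := by
  have h1 : mgf (fun ω => (σ * W ω - c)^2) P (-t)
      = ∫ ω, Real.exp (-(t * (σ * W ω - c)^2)) ∂P := by
    unfold mgf
    congr 1
    funext ω
    simp only [neg_mul]
  have hcont : Continuous fun x : ℝ => Real.exp (-(t * (σ * x - c)^2)) := by continuity
  rw [h1, ← gauss_int t σ c ht, ← hW,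
    integral_map hWm.aemeasurable hcont.aestronglyMeasurable]

lemma prodmgf {Ω : Type*} [MeasurableSpace Ω] (P : Measure Ω) [IsProbabilityMeasure P]
    (Z : ℕ → Ω → ℝ) (hmeas : ∀ k, Measurable (Z k))
    (hlaw : ∀ k, Measure.map (Z k) P = gaussianReal 0 1)
    (β B T a : ℝ) (hβ : 0 < β) (b : ℕ → ℝ)
    (hbB : ∀ n : ℕ, ∑ k ∈ Finset.range n, (b k)^2 * ((k:ℝ)+1)^(2*β) ≤ B)
    (hT : Real.exp 1 ≤ T) (ha1 : β ≤ a) (ha2 : a ≤ β + 1/Real.log T) (n : ℕ) :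
    Real.exp (-(K0 β B * T^(1/(1+2*β))))
      ≤ ∏ k ∈ Finset.range n, mgf (fun ω => (((k:ℝ)+1)^(-(1/2:ℝ)-a) * Z k ω - b k)^2) P (-T) := by
  have he1 : (1:ℝ) ≤ Real.exp 1 := by linarith [Real.add_one_le_exp 1]
  have hT1 : (1:ℝ) ≤ T := le_trans he1 hT
  have hT0 : (0:ℝ) < T := by linarith
  have hkpos : ∀ k:ℕ, (0:ℝ) < (k:ℝ)+1 := fun k => by positivity
  have hσ2 : ∀ k:ℕ, (((k:ℝ)+1)^(-(1/2:ℝ)-a))^2 = ((k:ℝ)+1)^(-(1+2*a)) := by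
    intro k
    rw [sq, ← Real.rpow_add (hkpos k)]
    congr 1
    ring
  have hval : ∀ k:ℕ, mgf (fun ω => (((k:ℝ)+1)^(-(1/2:ℝ)-a) * Z k ω - b k)^2) P (-T)
      = Real.exp (-((1/2) * Real.log (1 + 2*T*((k:ℝ)+1)^(-(1+2*a)))
          + T*(b k)^2/(1 + 2*T*((k:ℝ)+1)^(-(1+2*a))))) := by
    intro k
    rw [mgf_coord P (Z k) (hmeas k) (hlaw k) T (((k:ℝ)+1)^(-(1/2:ℝ)-a)) (b k) hT0.le]
    rw [hσ2 k]
    have hy0 : (0:ℝ) < 1 + 2*T*((k:ℝ)+1)^(-(1+2*a)) := by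
      have := Real.rpow_pos_of_pos (hkpos k) (-(1+2*a))
      nlinarith
    have hsqrt : (Real.sqrt (1 + 2*T*((k:ℝ)+1)^(-(1+2*a))))⁻¹
        = Real.exp (-((1/2) * Real.log (1 + 2*T*((k:ℝ)+1)^(-(1+2*a))))) := by
      rw [Real.sqrt_eq_rpow, Real.rpow_def_of_pos hy0, ← Real.exp_neg]
      congr 1
      ring
    rw [hsqrt, ← Real.exp_add]
    congr 1
    ring
  have hprod : ∏ k ∈ Finset.range n, mgf (fun ω => (((k:ℝ)+1)^(-(1/2:ℝ)-a) * Z k ω - b k)^2) P (-T)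
      = Real.exp (-(∑ k ∈ Finset.range n, ((1/2) * Real.log (1 + 2*T*((k:ℝ)+1)^(-(1+2*a)))
          + T*(b k)^2/(1 + 2*T*((k:ℝ)+1)^(-(1+2*a)))))) := by
    rw [Finset.prod_congr rfl (fun k _ => hval k), ← Real.exp_sum]
    congr 1
    rw [Finset.sum_neg_distrib]
  rw [hprod]
  apply Real.exp_le_exp.2
  have := Fbound β B T a hβ b hbB hT ha1 ha2 n
  linarith

lemma peralpha {Ω : Type*} [MeasurableSpace Ω] (P : Measure Ω) [IsProbabilityMeasure P]
    (Z : ℕ → Ω → ℝ) (hmeas : ∀ k, Measurable (Z k))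
    (hlaw : ∀ k, Measure.map (Z k) P = gaussianReal 0 1)
    (hindep : iIndepFun Z P)
    (β B : ℝ) (hβ : 0 < β) (b : ℕ → ℝ)
    (hbB : ∀ n : ℕ, ∑ k ∈ Finset.range n, (b k)^2 * ((k:ℝ)+1)^(2*β) ≤ B)
    (T a : ℝ) (hT : Real.exp 1 ≤ T) (ha1 : β ≤ a) (ha2 : a ≤ β + 1/Real.log T) :
    ENNReal.ofReal (Real.exp (-(K0 β B * T^(1/(1+2*β))) - 1))
      ≤ P {ω | ∑' k : ℕ, ENNReal.ofReal ((((k:ℝ)+1)^(-(1/2:ℝ)-a) * Z k ω - b k)^2)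
            ≤ ENNReal.ofReal ((Real.sqrt (K0 β B + 2) * T^(-β/(1+2*β)))^2)} := by
  have he1 : (1:ℝ) ≤ Real.exp 1 := by linarith [Real.add_one_le_exp 1]
  have he2 : (2:ℝ) ≤ Real.exp 1 := by linarith [Real.add_one_le_exp 1]
  have hT1 : (1:ℝ) ≤ T := le_trans he1 hT
  have hT0 : (0:ℝ) < T := by linarith
  have hqβ0 : (0:ℝ) < 1+2*β := by linarith
  have hlog2nn : (0:ℝ) ≤ Real.log 2 := Real.log_nonneg (by norm_num)
  have hB0 : 0 ≤ B := by simpa using hbB 0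
  have hK0 : 0 < K0 β B := by
    unfold K0
    have h1 : (0:ℝ) < 2^(2*β+2)/(4*β) := by positivity
    have h2 : (0:ℝ) ≤ Real.exp 2 * B := by positivity
    nlinarith
  set γ : ℝ := 1/(1+2*β) with hγdef
  have hγ0 : 0 < γ := by positivity
  set Tγ : ℝ := T^γ with hTγdef
  have hTγ1 : 1 ≤ Tγ := Real.one_le_rpow hT1 hγ0.le
  set c : ℝ := Real.sqrt (K0 β B + 2) with hcdef
  set ε2 : ℝ := (c * T^(-β/(1+2*β)))^2 with hε2def
  have hε2nn : 0 ≤ ε2 := sq_nonneg _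
  have hc2 : c^2 = K0 β B + 2 := Real.sq_sqrt (by linarith)
  have htε2 : T * ε2 = (K0 β B + 2) * Tγ := by
    rw [hε2def, mul_pow, hc2]
    have hx2 : (T^(-β/(1+2*β)))^2 = T^(-(2*β)/(1+2*β)) := by
      rw [sq, ← Real.rpow_add hT0]
      congr 1
      ring
    rw [hx2]
    have hTT : T * T^(-(2*β)/(1+2*β)) = Tγ := by
      rw [hTγdef, hγdef]
      nth_rewrite 1 [← Real.rpow_one T]
      rw [← Real.rpow_add hT0]
      congr 1
      field_simp
      ring
    calc T * ((K0 β B + 2) * T^(-(2*β)/(1+2*β)))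
        = (K0 β B + 2) * (T * T^(-(2*β)/(1+2*β))) := by ring
      _ = (K0 β B + 2) * Tγ := by rw [hTT]
  set X : ℕ → Ω → ℝ := fun k ω => (((k:ℝ)+1)^(-(1/2:ℝ)-a) * Z k ω - b k)^2 with hX
  have hXmeas : ∀ k, Measurable (X k) := by
    intro k
    apply Measurable.pow_const
    exact ((hmeas k).const_mul _).sub measurable_const
  have hXnn : ∀ k ω, 0 ≤ X k ω := fun k ω => sq_nonneg _
  have hXind : iIndepFun X P := by
    have := hindep.comp (fun k (x:ℝ) => (((k:ℝ)+1)^(-(1/2:ℝ)-a) * x - b k)^2)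
      (fun k => ((measurable_id.const_mul _).sub measurable_const).pow_const 2)
    exact this
  have hmgfb : ∀ n, Real.exp (-(K0 β B * Tγ)) ≤ ∏ k ∈ Finset.range n, mgf (X k) P (-T) :=
    fun n => prodmgf P Z hmeas hlaw β B T a hβ b hbB hT ha1 ha2 n
  have hch := chernoff P X hXmeas hXnn hXind T ε2 (K0 β B * Tγ) hT0 hε2nn hmgfb
  refine le_trans (ENNReal.ofReal_le_ofReal ?_) hch
  -- exp(-K0 Tγ - 1) ≤ exp(-K0 Tγ) - exp(-(T*ε2))
  rw [htε2]
  have hsplit : Real.exp (-((K0 β B + 2) * Tγ)) = Real.exp (-(K0 β B * Tγ)) * Real.exp (-(2*Tγ)) := by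
    rw [← Real.exp_add]
    congr 1
    ring
  have hsplit2 : Real.exp (-(K0 β B * Tγ) - 1) = Real.exp (-(K0 β B * Tγ)) * Real.exp (-1) := by
    rw [← Real.exp_add, sub_eq_add_neg]
  have he1' : Real.exp (-1:ℝ) ≤ 1/2 := by
    rw [Real.exp_neg]
    rw [show ((1:ℝ)/2) = (2:ℝ)⁻¹ from by norm_num]
    apply inv_anti₀ (by norm_num) he2
  have he2' : Real.exp (-(2*Tγ)) ≤ 1/4 := by
    have h1 : Real.exp (-(2*Tγ)) ≤ Real.exp (-2:ℝ) := by
      apply Real.exp_le_exp.2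
      linarith
    have h2 : (4:ℝ) ≤ Real.exp 2 := by
      have : Real.exp 2 = Real.exp 1 * Real.exp 1 := by
        rw [← Real.exp_add]; norm_num
      nlinarith
    have h3 : Real.exp (-2:ℝ) ≤ 1/4 := by
      rw [Real.exp_neg]
      rw [show ((1:ℝ)/4) = (4:ℝ)⁻¹ from by norm_num]
      apply inv_anti₀ (by norm_num) h2
    linarith
  have hepos : 0 < Real.exp (-(K0 β B * Tγ)) := Real.exp_pos _
  rw [hsplit, hsplit2]
  nlinarith [hepos, he1', he2']

lemma priormass (T β : ℝ) (hβ : 0 < β) (hT : Real.exp 1 ≤ T) (hcond : β + 1 ≤ Real.log T) :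
    ENNReal.ofReal ((Real.log T)⁻¹ * (Real.log T)⁻¹ * Real.exp (-(T^(1/(1+2*β)))))
      ≤ ((volume.restrict (Icc (0:ℝ) (Real.log T))).withDensity
          (fun x => ENNReal.ofReal
            ((∫ y in (0:ℝ)..Real.log T, Real.exp (-(T ^ (1/(1+2*y)))))⁻¹
              * Real.exp (-(T ^ (1/(1+2*x))))))) (Icc β (β + 1/Real.log T)) := by
  have he1 : (1:ℝ) ≤ Real.exp 1 := by linarith [Real.add_one_le_exp 1]
  have hT1 : (1:ℝ) ≤ T := le_trans he1 hT
  have hT0 : (0:ℝ) < T := by linarith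
  have hlogT1 : (1:ℝ) ≤ Real.log T := by linarith
  have hlogT0 : (0:ℝ) < Real.log T := by linarith
  have hδ : 1/Real.log T ≤ 1 := by rw [div_le_one hlogT0]; linarith
  have hδ0 : 0 < 1/Real.log T := by positivity
  -- continuity of integrand
  have hrpow : (fun y : ℝ => Real.exp (-(T ^ (1/(1+2*y)))))
      = fun y : ℝ => Real.exp (-(Real.exp (Real.log T * (1/(1+2*y))))) := by
    funext y
    rw [Real.rpow_def_of_pos hT0]
  have hcont : ContinuousOn (fun y : ℝ => Real.exp (-(T ^ (1/(1+2*y))))) (Icc 0 (Real.log T)) := by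
    rw [hrpow]
    have h1 : ContinuousOn (fun y : ℝ => 1/(1+2*y)) (Icc 0 (Real.log T)) := by
      apply ContinuousOn.div continuousOn_const
        ((continuous_const.add (continuous_const.mul continuous_id)).continuousOn)
      intro y hy
      have : (0:ℝ) ≤ y := hy.1
      exact ne_of_gt (show (0:ℝ) < 1 + 2*y by linarith)
    have h2 : ContinuousOn (fun y : ℝ => Real.log T * (1/(1+2*y))) (Icc 0 (Real.log T)) :=
      continuousOn_const.mul h1
    have h3 : ContinuousOn (fun y : ℝ => Real.exp (Real.log T * (1/(1+2*y)))) (Icc 0 (Real.log T)) :=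
      Real.continuous_exp.comp_continuousOn h2
    exact Real.continuous_exp.comp_continuousOn h3.neg
  set C : ℝ := ∫ y in (0:ℝ)..Real.log T, Real.exp (-(T ^ (1/(1+2*y)))) with hCdef
  have hIntegrable : IntervalIntegrable (fun y : ℝ => Real.exp (-(T ^ (1/(1+2*y))))) volume 0 (Real.log T) := by
    apply ContinuousOn.intervalIntegrable
    rwa [Set.uIcc_of_le hlogT0.le]
  have hCpos : 0 < C := by
    apply intervalIntegral.intervalIntegral_pos_of_pos_on hIntegrable
    · intro x _
      exact Real.exp_pos _
    · exact hlogT0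
  have hCle : C ≤ Real.log T := by
    have h1 : ∀ y ∈ Icc (0:ℝ) (Real.log T), Real.exp (-(T ^ (1/(1+2*y)))) ≤ 1 := by
      intro y hy
      rw [Real.exp_le_one_iff]
      have : (0:ℝ) ≤ T ^ (1/(1+2*y)) := Real.rpow_nonneg hT0.le _
      linarith
    have h2 := intervalIntegral.integral_mono_on hlogT0.le hIntegrable
      (intervalIntegrable_const (c := (1:ℝ))) h1
    have h3 : (∫ (_ : ℝ) in (0:ℝ)..Real.log T, (1:ℝ)) = Real.log T := by simp
    rw [h3] at h2
    exact h2
  have hCinv : (Real.log T)⁻¹ ≤ C⁻¹ := by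
    apply inv_anti₀ hCpos hCle
  -- measure computation
  rw [withDensity_apply _ measurableSet_Icc]
  rw [Measure.restrict_restrict measurableSet_Icc]
  have hsub : Icc β (β + 1/Real.log T) ∩ Icc (0:ℝ) (Real.log T) = Icc β (β + 1/Real.log T) := by
    apply Set.inter_eq_left.2
    intro x hx
    exact ⟨le_trans hβ.le hx.1, le_trans hx.2 (by linarith)⟩
  rw [hsub]
  have hbound : ∀ x ∈ Icc β (β + 1/Real.log T),
      ENNReal.ofReal ((Real.log T)⁻¹ * Real.exp (-(T^(1/(1+2*β)))))
        ≤ ENNReal.ofReal (C⁻¹ * Real.exp (-(T ^ (1/(1+2*x))))) := by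
    intro x hx
    apply ENNReal.ofReal_le_ofReal
    have hx0 : β ≤ x := hx.1
    have hexp : Real.exp (-(T^(1/(1+2*β)))) ≤ Real.exp (-(T ^ (1/(1+2*x)))) := by
      apply Real.exp_le_exp.2
      have : T ^ (1/(1+2*x)) ≤ T^(1/(1+2*β)) := by
        apply Real.rpow_le_rpow_of_exponent_le hT1
        apply one_div_le_one_div_of_le (by linarith)
        linarith
      linarith
    apply mul_le_mul hCinv hexp (Real.exp_pos _).le (by positivity)
  have hmeasdens : Measurable (fun x : ℝ => ENNReal.ofReal (C⁻¹ * Real.exp (-(T ^ (1/(1+2*x)))))) := by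
    have heq : (fun x : ℝ => ENNReal.ofReal (C⁻¹ * Real.exp (-(T ^ (1/(1+2*x))))))
        = fun x : ℝ => ENNReal.ofReal (C⁻¹ * Real.exp (-(Real.exp (Real.log T * (1/(1+2*x)))))) := by
      funext x
      rw [Real.rpow_def_of_pos hT0]
    rw [heq]
    apply Measurable.ennreal_ofReal
    apply Measurable.const_mul
    apply Real.measurable_exp.comp
    apply Measurable.neg
    apply Real.measurable_exp.comp
    apply Measurable.const_mul
    exact measurable_const.div ((measurable_id.const_mul 2).const_add 1)
  calc ENNReal.ofReal ((Real.log T)⁻¹ * (Real.log T)⁻¹ * Real.exp (-(T^(1/(1+2*β)))))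
      = ENNReal.ofReal ((Real.log T)⁻¹ * Real.exp (-(T^(1/(1+2*β))))) * ENNReal.ofReal (1/Real.log T) := by
        rw [← ENNReal.ofReal_mul (by positivity)]
        congr 1
        rw [one_div]
        ring
    _ = ENNReal.ofReal ((Real.log T)⁻¹ * Real.exp (-(T^(1/(1+2*β))))) * volume (Icc β (β + 1/Real.log T)) := by
        rw [Real.volume_Icc]
        congr 1
        rw [add_sub_cancel_left]
    _ = ∫⁻ x in Icc β (β + 1/Real.log T), ENNReal.ofReal ((Real.log T)⁻¹ * Real.exp (-(T^(1/(1+2*β))))) ∂volume := by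
        rw [setLIntegral_const]
    _ ≤ ∫⁻ x in Icc β (β + 1/Real.log T), ENNReal.ofReal (C⁻¹ * Real.exp (-(T ^ (1/(1+2*x))))) ∂volume :=
        setLIntegral_mono hmeasdens hbound

lemma ofReal_tsum_event (f : ℕ → ℝ) (hf : ∀ k, 0 ≤ f k) (r : ℝ) (hr : 0 ≤ r) :
    (Summable f ∧ ∑' k, f k ≤ r) ↔ (∑' k, ENNReal.ofReal (f k)) ≤ ENNReal.ofReal r := by
  constructor
  · rintro ⟨hs, hle⟩
    rw [← ENNReal.ofReal_tsum_of_nonneg hf hs]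
    exact ENNReal.ofReal_le_ofReal hle
  · intro h
    have hne : (∑' k, ENNReal.ofReal (f k)) ≠ ⊤ := ne_top_of_le_ne_top ENNReal.ofReal_ne_top h
    have hsum0 : Summable fun k => (ENNReal.ofReal (f k)).toReal := ENNReal.summable_toReal hne
    have heq : (fun k => (ENNReal.ofReal (f k)).toReal) = f :=
      funext fun k => ENNReal.toReal_ofReal (hf k)
    rw [heq] at hsum0
    refine ⟨hsum0, ?_⟩
    rw [← ENNReal.ofReal_tsum_of_nonneg hf hsum0] at h
    exact (ENNReal.ofReal_le_ofReal_iff hr).1 h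

theorem stmt_8 {Ω : Type*} [MeasurableSpace Ω] (P : Measure Ω) [IsProbabilityMeasure P]
    (Z : ℕ → Ω → ℝ) (hmeas : ∀ k, Measurable (Z k))
    (hlaw : ∀ k, Measure.map (Z k) P = gaussianReal 0 1)
    (hindep : iIndepFun Z P)
    (A : ℝ → Ω → ℝ) (hAmeas : ∀ T, Measurable (A T))
    (hAlaw : ∀ T > Real.exp 1,
      Measure.map (A T) P
        = (volume.restrict (Icc (0:ℝ) (Real.log T))).withDensity
            (fun x => ENNReal.ofReal
              ((∫ y in (0:ℝ)..Real.log T, Real.exp (-(T ^ (1/(1+2*y)))))⁻¹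
                * Real.exp (-(T ^ (1/(1+2*x)))))))
    (hAZ : ∀ T > Real.exp 1, IndepFun (A T) (fun ω => fun k => Z k ω) P)
    (β : ℝ) (hβ : 0 < β)
    (b : ℕ → ℝ) (hb : Summable (fun k => (b k)^2 * ((k:ℝ)+1)^(2*β))) :
    ∃ c > 0, ∃ C > 0, ∃ T0 > Real.exp 1, ∀ T ≥ T0,
      ENNReal.ofReal (Real.exp (-C * T * (c * T^(-β/(1+2*β)))^2))
        ≤ P {ω | Summable (fun k : ℕ =>
              (((k:ℝ)+1)^(-(1/2) - A T ω) * Z k ω - b k)^2) ∧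
            ∑' k : ℕ, (((k:ℝ)+1)^(-(1/2) - A T ω) * Z k ω - b k)^2
              ≤ (c * T^(-β/(1+2*β)))^2} := by
  classical
  set B : ℝ := ∑' k, (b k)^2 * ((k:ℝ)+1)^(2*β) with hBdef
  have hbB : ∀ n : ℕ, ∑ k ∈ Finset.range n, (b k)^2 * ((k:ℝ)+1)^(2*β) ≤ B := by
    intro n
    apply Summable.sum_le_tsum _ _ hb
    intro k _
    have : (0:ℝ) < (k:ℝ)+1 := by positivity
    positivity
  have hB0 : 0 ≤ B := by simpa using hbB 0
  have hlog2nn : (0:ℝ) ≤ Real.log 2 := Real.log_nonneg (by norm_num)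
  have hK0 : 0 < K0 β B := by
    unfold K0
    have h1 : (0:ℝ) < 2^(2*β+2)/(4*β) := by positivity
    have h2 : (0:ℝ) ≤ Real.exp 2 * B := by positivity
    nlinarith
  set c : ℝ := Real.sqrt (K0 β B + 2) with hcdef
  have hc0 : 0 < c := Real.sqrt_pos.2 (by linarith)
  have hc2 : c^2 = K0 β B + 2 := Real.sq_sqrt (by linarith)
  set C : ℝ := (K0 β B + 3)/(K0 β B + 2) with hCdef
  have hC0 : 0 < C := by positivity
  -- eventual conditions
  set γ : ℝ := 1/(1+2*β) with hγdef
  have hγ0 : 0 < γ := by positivity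
  have hev1 : ∀ᶠ T in Filter.atTop, Real.exp 1 < T := Filter.eventually_gt_atTop _
  have hev2 : ∀ᶠ T in Filter.atTop, β + 1 ≤ Real.log T :=
    Real.tendsto_log_atTop.eventually_ge_atTop _
  have hev3 : ∀ᶠ T : ℝ in Filter.atTop, (Real.log T)^2 ≤ Real.exp (2*T^γ - 1) := by
    have hlo := isLittleO_log_rpow_atTop (half_pos hγ0)
    have hb1 := hlo.bound one_pos
    filter_upwards [hb1, Filter.eventually_ge_atTop (1:ℝ)] with T hT1 hT2
    have hT0 : (0:ℝ) < T := by linarith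
    have hlogTnn : 0 ≤ Real.log T := Real.log_nonneg hT2
    have hrnn : (0:ℝ) ≤ T^(γ/2) := Real.rpow_nonneg hT0.le _
    have hlog_le : Real.log T ≤ T^(γ/2) := by
      have := hT1
      rw [Real.norm_eq_abs, Real.norm_eq_abs, abs_of_nonneg hlogTnn, abs_of_nonneg hrnn] at this
      linarith
    have hsq : (Real.log T)^2 ≤ (T^(γ/2))^2 := by nlinarith
    have hsq2 : (T^(γ/2))^2 = T^γ := by
      rw [sq, ← Real.rpow_add hT0]
      congr 1
      ring
    have hTγ1 : (1:ℝ) ≤ T^γ := Real.one_le_rpow hT2 hγ0.le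
    have hexp : T^γ ≤ Real.exp (2*T^γ - 1) := by
      have h1 : T^γ ≤ Real.exp (T^γ) := by linarith [Real.add_one_le_exp (T^γ)]
      have h2 : Real.exp (T^γ) ≤ Real.exp (2*T^γ - 1) := by
        apply Real.exp_le_exp.2
        linarith
      linarith
    calc (Real.log T)^2 ≤ T^γ := by rw [← hsq2]; exact hsq
      _ ≤ Real.exp (2*T^γ - 1) := hexp
  obtain ⟨t0, ht0⟩ := Filter.eventually_atTop.1 ((hev1.and hev2).and hev3)
  refine ⟨c, hc0, C, hC0, max t0 (Real.exp 1 + 1), by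
    apply lt_of_lt_of_le _ (le_max_right _ _); linarith, ?_⟩
  intro T hTge
  obtain ⟨⟨hTe, hTlog⟩, hTnum⟩ := ht0 T (le_trans (le_max_left _ _) hTge)
  have hTee : Real.exp 1 ≤ T := hTe.le
  have he1 : (1:ℝ) ≤ Real.exp 1 := by linarith [Real.add_one_le_exp 1]
  have hT1 : (1:ℝ) ≤ T := le_trans he1 hTee
  have hT0 : (0:ℝ) < T := by linarith
  have hlogT1 : (1:ℝ) ≤ Real.log T := by linarith
  have hlogT0 : (0:ℝ) < Real.log T := by linarith
  set Tγ : ℝ := T^γ with hTγdef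
  have hTγ1 : 1 ≤ Tγ := Real.one_le_rpow hT1 hγ0.le
  set ε2r : ℝ := (c * T^(-β/(1+2*β)))^2 with hε2def
  have hε2nn : 0 ≤ ε2r := sq_nonneg _
  -- pair map and product structure
  set Zvec : Ω → (ℕ → ℝ) := fun ω => fun k => Z k ω with hZvecdef
  have hZvm : Measurable Zvec := measurable_pi_lambda _ (fun k => hmeas k)
  set pairMap : Ω → ℝ × (ℕ → ℝ) := fun ω => (A T ω, Zvec ω) with hpairdef
  have hpm : Measurable pairMap := (hAmeas T).prodMk hZvm
  set D : Set (ℝ × (ℕ → ℝ)) :=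
    {p | ∑' k : ℕ, ENNReal.ofReal ((((k:ℝ)+1)^(-(1/2:ℝ) - p.1) * p.2 k - b k)^2)
        ≤ ENNReal.ofReal ε2r} with hDdef
  have hterm_meas : ∀ k : ℕ, Measurable (fun p : ℝ × (ℕ → ℝ) =>
      (((k:ℝ)+1)^(-(1/2:ℝ) - p.1) * p.2 k - b k)^2) := by
    intro k
    have hkpos : (0:ℝ) < (k:ℝ)+1 := by positivity
    have h1 : Measurable (fun p : ℝ × (ℕ → ℝ) => ((k:ℝ)+1)^(-(1/2:ℝ) - p.1)) := by
      have heq : (fun p : ℝ × (ℕ → ℝ) => ((k:ℝ)+1)^(-(1/2:ℝ) - p.1))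
          = fun p : ℝ × (ℕ → ℝ) => Real.exp (Real.log ((k:ℝ)+1) * (-(1/2:ℝ) - p.1)) := by
        funext p
        rw [Real.rpow_def_of_pos hkpos]
      rw [heq]
      exact Real.measurable_exp.comp (measurable_const.mul (measurable_const.sub measurable_fst))
    have h2 : Measurable (fun p : ℝ × (ℕ → ℝ) => p.2 k) :=
      (measurable_pi_apply k).comp measurable_snd
    exact ((h1.mul h2).sub measurable_const).pow_const 2
  have hDmeas : MeasurableSet D := by
    apply measurableSet_le _ measurable_const
    exact Measurable.ennreal_tsum (fun k => (hterm_meas k).ennreal_ofReal)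
  have hEeq : {ω | Summable (fun k : ℕ =>
        (((k:ℝ)+1)^(-(1/2) - A T ω) * Z k ω - b k)^2) ∧
      ∑' k : ℕ, (((k:ℝ)+1)^(-(1/2) - A T ω) * Z k ω - b k)^2 ≤ (c * T^(-β/(1+2*β)))^2}
      = pairMap ⁻¹' D := by
    ext ω
    simp only [Set.mem_setOf_eq, Set.mem_preimage, hDdef, hpairdef]
    exact ofReal_tsum_event _ (fun k => sq_nonneg _) _ hε2nn
  rw [hEeq, ← Measure.map_apply hpm hDmeas]
  have hprodlaw : Measure.map pairMap P = (Measure.map (A T) P).prod (Measure.map Zvec P) :=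
    (indepFun_iff_map_prod_eq_prod_map_map (hAmeas T).aemeasurable hZvm.aemeasurable).1
      (hAZ T hTe)
  rw [hprodlaw]
  haveI : IsProbabilityMeasure (Measure.map Zvec P) := Measure.isProbabilityMeasure_map hZvm.aemeasurable
  rw [Measure.prod_apply hDmeas]
  -- lower bound the integral
  set I : Set ℝ := Icc β (β + 1/Real.log T) with hIdef
  have hIm : MeasurableSet I := measurableSet_Icc
  have hslice : ∀ a ∈ I, ENNReal.ofReal (Real.exp (-(K0 β B * Tγ) - 1))
      ≤ (Measure.map Zvec P) (Prod.mk a ⁻¹' D) := by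
    intro a ha
    have ha1 : β ≤ a := ha.1
    have ha2 : a ≤ β + 1/Real.log T := ha.2
    have hsliceD : Prod.mk a ⁻¹' D
        = {z : ℕ → ℝ | ∑' k : ℕ, ENNReal.ofReal ((((k:ℝ)+1)^(-(1/2:ℝ) - a) * z k - b k)^2)
            ≤ ENNReal.ofReal ε2r} := rfl
    rw [Measure.map_apply hZvm (measurable_prodMk_left hDmeas)]
    have hpre : Zvec ⁻¹' (Prod.mk a ⁻¹' D)
        = {ω | ∑' k : ℕ, ENNReal.ofReal ((((k:ℝ)+1)^(-(1/2:ℝ)-a) * Z k ω - b k)^2)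
            ≤ ENNReal.ofReal ((Real.sqrt (K0 β B + 2) * T^(-β/(1+2*β)))^2)} := by
      rw [hsliceD]
      rfl
    rw [hpre]
    have := peralpha P Z hmeas hlaw hindep β B hβ b hbB T a hTee ha1 ha2
    rw [hTγdef, hγdef]
    exact this
  have hlb1 : ENNReal.ofReal (Real.exp (-(K0 β B * Tγ) - 1)) * (Measure.map (A T) P) I
      ≤ ∫⁻ a, (Measure.map Zvec P) (Prod.mk a ⁻¹' D) ∂(Measure.map (A T) P) := by
    calc ENNReal.ofReal (Real.exp (-(K0 β B * Tγ) - 1)) * (Measure.map (A T) P) I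
        = ∫⁻ _ in I, ENNReal.ofReal (Real.exp (-(K0 β B * Tγ) - 1)) ∂(Measure.map (A T) P) := by
          rw [setLIntegral_const]
      _ ≤ ∫⁻ a in I, (Measure.map Zvec P) (Prod.mk a ⁻¹' D) ∂(Measure.map (A T) P) := by
          apply setLIntegral_mono (measurable_measure_prodMk_left hDmeas) hslice
      _ ≤ ∫⁻ a, (Measure.map Zvec P) (Prod.mk a ⁻¹' D) ∂(Measure.map (A T) P) :=
          setLIntegral_le_lintegral _ _
  -- prior mass
  have hprior : ENNReal.ofReal ((Real.log T)⁻¹ * (Real.log T)⁻¹ * Real.exp (-Tγ))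
      ≤ (Measure.map (A T) P) I := by
    rw [hAlaw T hTe]
    have := priormass T β hβ hTee hTlog
    rw [hTγdef, hγdef]
    exact this
  -- combine
  have hfinal : ENNReal.ofReal (Real.exp (-C * T * (c * T^(-β/(1+2*β)))^2))
      ≤ ENNReal.ofReal (Real.exp (-(K0 β B * Tγ) - 1))
        * ENNReal.ofReal ((Real.log T)⁻¹ * (Real.log T)⁻¹ * Real.exp (-Tγ)) := by
    rw [← ENNReal.ofReal_mul (Real.exp_pos _).le]
    apply ENNReal.ofReal_le_ofReal
    -- exponent identity : -C * T * ε2r = -(K0+3) * Tγ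
    have htε2 : T * ε2r = (K0 β B + 2) * Tγ := by
      rw [hε2def, mul_pow, hc2]
      have hx2 : (T^(-β/(1+2*β)))^2 = T^(-(2*β)/(1+2*β)) := by
        rw [sq, ← Real.rpow_add hT0]
        congr 1
        ring
      rw [hx2]
      have hTT : T * T^(-(2*β)/(1+2*β)) = Tγ := by
        rw [hTγdef, hγdef]
        nth_rewrite 1 [← Real.rpow_one T]
        rw [← Real.rpow_add hT0]
        congr 1
        field_simp
        ring
      calc T * ((K0 β B + 2) * T^(-(2*β)/(1+2*β)))
          = (K0 β B + 2) * (T * T^(-(2*β)/(1+2*β))) := by ring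
        _ = (K0 β B + 2) * Tγ := by rw [hTT]
    have hCe : -C * T * (c * T^(-β/(1+2*β)))^2 = -((K0 β B + 3) * Tγ) := by
      have h1 : -C * T * (c * T^(-β/(1+2*β)))^2 = -(C * (T * ε2r)) := by
        rw [hε2def]; ring
      rw [h1, htε2, hCdef]
      field_simp
    rw [hCe]
    -- real inequality
    have hsqpos : (0:ℝ) < (Real.log T)^2 := by positivity
    have hinv : (Real.exp (2*Tγ - 1))⁻¹ ≤ ((Real.log T)^2)⁻¹ := inv_anti₀ hsqpos hTnum
    have hinv' : Real.exp (-(2*Tγ - 1)) ≤ (Real.log T)⁻¹ * (Real.log T)⁻¹ := by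
      rw [Real.exp_neg]
      calc (Real.exp (2*Tγ-1))⁻¹ ≤ ((Real.log T)^2)⁻¹ := hinv
        _ = (Real.log T)⁻¹ * (Real.log T)⁻¹ := by rw [sq, mul_inv]
    have hprodexp : Real.exp (-(K0 β B * Tγ) - 1) * (Real.exp (-(2*Tγ-1)) * Real.exp (-Tγ))
        = Real.exp (-((K0 β B + 3) * Tγ)) := by
      rw [← Real.exp_add, ← Real.exp_add]
      congr 1
      ring
    have hrige : Real.exp (-(K0 β B * Tγ) - 1) * (Real.exp (-(2*Tγ-1)) * Real.exp (-Tγ))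
        ≤ Real.exp (-(K0 β B * Tγ) - 1) * ((Real.log T)⁻¹ * (Real.log T)⁻¹ * Real.exp (-Tγ)) := by
      apply mul_le_mul_of_nonneg_left _ (Real.exp_pos _).le
      exact mul_le_mul_of_nonneg_right hinv' (Real.exp_pos _).le
    rw [← hprodexp]
    exact hrige
  calc ENNReal.ofReal (Real.exp (-C * T * (c * T^(-β/(1+2*β)))^2))
      ≤ ENNReal.ofReal (Real.exp (-(K0 β B * Tγ) - 1))
        * ENNReal.ofReal ((Real.log T)⁻¹ * (Real.log T)⁻¹ * Real.exp (-Tγ)) := hfinal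
    _ ≤ ENNReal.ofReal (Real.exp (-(K0 β B * Tγ) - 1)) * (Measure.map (A T) P) I :=
        mul_le_mul_right hprior _
    _ ≤ ∫⁻ a, (Measure.map Zvec P) (Prod.mk a ⁻¹' D) ∂(Measure.map (A T) P) := hlb1
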